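/- For every ε ∈ (0,1) there exist constants c > 0, C > 0 and Δ_0 > 0 such that for all Δ = T/m ≤ Δ_0 and every grid time t_i < T, one has almost surely, on the event {X^Δ_{t_i} ∈ D_{t_i} and F(t_i, X^Δ_{t_i}) ≥ 2Δ^{(1−ε)/2}}, the conditional bound P[X^Δ_{t_{i+1}} ∉ D_{t_{i+1}} | F_{t_i}] ≤ C exp(−c Δ^{−ε}). In words: if the Euler scheme is at distance at least 2Δ^{(1−ε)/2} from the boundary at a grid time, the conditional probability that it has exited the (time-dependent) domain at the next grid time is exponentially small in Δ^{−ε}. -/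

import Mathlib

open MeasureTheory ProbabilityTheory Set
open scoped RealInnerProductSpace ENNReal NNReal Classical

noncomputable section

/-- A standard `d'`-dimensional Brownian motion on a probability space:
a.s. starting at `0`, a.s. continuous, with independent centered Gaussian
increments with variance `t - s` and independent coordinates. -/
structure IsBrownianMotion {Ω : Type*} {mΩ : MeasurableSpace Ω} (P : Measure Ω) {d' : ℕ}
    (W : ℝ → Ω → EuclideanSpace ℝ (Fin d')) : Prop where
  meas : ∀ t : ℝ, Measurable (W t)
  init : ∀ᵐ ω ∂P, W 0 ω = 0
  cont : ∀ᵐ ω ∂P, Continuous fun t => W t ω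
  gauss : ∀ s t : ℝ, 0 ≤ s → s ≤ t → ∀ i : Fin d',
    P.map (fun ω => W t ω i - W s ω i) = gaussianReal 0 (Real.toNNReal (t - s))
  indep_coords : ∀ s t : ℝ, 0 ≤ s → s ≤ t →
    iIndepFun (fun (i : Fin d') ω => W t ω i - W s ω i) P
  indep_incr : ∀ s t u v : ℝ, 0 ≤ s → s ≤ t → t ≤ u → u ≤ v →
    IndepFun (fun ω => W t ω - W s ω) (fun ω => W v ω - W u ω) P

/-- The Euler scheme with time step `Δ`, started at time `s` from `x`, on the grid
`s, s + Δ, s + 2Δ, …` : values at grid points. -/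
def eulerGridFrom {Ω : Type*} {d d' : ℕ} (Δ s : ℝ)
    (b : ℝ → EuclideanSpace ℝ (Fin d) → EuclideanSpace ℝ (Fin d))
    (σm : ℝ → EuclideanSpace ℝ (Fin d) →
      (EuclideanSpace ℝ (Fin d') →L[ℝ] EuclideanSpace ℝ (Fin d)))
    (W : ℝ → Ω → EuclideanSpace ℝ (Fin d')) (x : EuclideanSpace ℝ (Fin d)) (ω : Ω) :
    ℕ → EuclideanSpace ℝ (Fin d)
  | 0 => x
  | i + 1 =>
      eulerGridFrom Δ s b σm W x ω i
        + Δ • b (s + (i : ℝ) * Δ) (eulerGridFrom Δ s b σm W x ω i)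
        + σm (s + (i : ℝ) * Δ) (eulerGridFrom Δ s b σm W x ω i)
            (W (s + ((i : ℝ) + 1) * Δ) ω - W (s + (i : ℝ) * Δ) ω)

/-- The continuously interpolated Euler scheme with time step `Δ`, started at time `s`
from `x`, evaluated at time `t ≥ s`. -/
def eulerFrom {Ω : Type*} {d d' : ℕ} (Δ s : ℝ)
    (b : ℝ → EuclideanSpace ℝ (Fin d) → EuclideanSpace ℝ (Fin d))
    (σm : ℝ → EuclideanSpace ℝ (Fin d) →
      (EuclideanSpace ℝ (Fin d') →L[ℝ] EuclideanSpace ℝ (Fin d)))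
    (W : ℝ → Ω → EuclideanSpace ℝ (Fin d')) (x : EuclideanSpace ℝ (Fin d))
    (t : ℝ) (ω : Ω) : EuclideanSpace ℝ (Fin d) :=
  let i : ℕ := ⌊(t - s) / Δ⌋₊
  eulerGridFrom Δ s b σm W x ω i
    + (t - (s + (i : ℝ) * Δ)) • b (s + (i : ℝ) * Δ) (eulerGridFrom Δ s b σm W x ω i)
    + σm (s + (i : ℝ) * Δ) (eulerGridFrom Δ s b σm W x ω i)
        (W t ω - W (s + (i : ℝ) * Δ) ω)

/-- Index of the first grid time `s + iΔ`, `i ≥ 1`, at which the Euler scheme started at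
time `s` from `x` has left the time-dependent domain `D_t = {y | F t y > 0}`.
By convention (`sInf ∅ = 0` in `ℕ`), the value `0` encodes that the scheme never exits,
i.e. that the discrete exit time is `+∞`. -/
def discExitIdxFrom {Ω : Type*} {d d' : ℕ} (Δ s : ℝ)
    (F : ℝ → EuclideanSpace ℝ (Fin d) → ℝ)
    (b : ℝ → EuclideanSpace ℝ (Fin d) → EuclideanSpace ℝ (Fin d))
    (σm : ℝ → EuclideanSpace ℝ (Fin d) →
      (EuclideanSpace ℝ (Fin d') →L[ℝ] EuclideanSpace ℝ (Fin d)))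
    (W : ℝ → Ω → EuclideanSpace ℝ (Fin d')) (x : EuclideanSpace ℝ (Fin d)) (ω : Ω) : ℕ :=
  sInf {i : ℕ | 1 ≤ i ∧ F (s + (i : ℝ) * Δ) (eulerGridFrom Δ s b σm W x ω i) ≤ 0}


/-- The property of being a standard Brownian motion adapted to the filtration `ℱ`,
with increments independent of the past. -/
structure IsBMFiltration {Ω : Type*} {mΩ : MeasurableSpace Ω} (P : Measure Ω)
    (ℱ : Filtration ℝ mΩ) {d' : ℕ} (W : ℝ → Ω → EuclideanSpace ℝ (Fin d')) : Prop where
  adapted : ∀ t : ℝ, 0 ≤ t → Measurable[ℱ t] (W t)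
  indep_past : ∀ s t : ℝ, 0 ≤ s → s ≤ t →
    Indep (MeasurableSpace.comap (fun ω => W t ω - W s ω) inferInstance) (ℱ s) P

lemma eulerGridFrom_measurable {Ω : Type*} {mΩ : MeasurableSpace Ω} {d d' : ℕ}
    (ℱ : Filtration ℝ mΩ) {W : ℝ → Ω → EuclideanSpace ℝ (Fin d')}
    (hadapt : ∀ t : ℝ, 0 ≤ t → Measurable[ℱ t] (W t))
    {b : ℝ → EuclideanSpace ℝ (Fin d) → EuclideanSpace ℝ (Fin d)}
    {σm : ℝ → EuclideanSpace ℝ (Fin d) →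
      (EuclideanSpace ℝ (Fin d') →L[ℝ] EuclideanSpace ℝ (Fin d))}
    (hb : Measurable (Function.uncurry b))
    (hσ : Measurable fun p : (ℝ × EuclideanSpace ℝ (Fin d)) × EuclideanSpace ℝ (Fin d') =>
      σm p.1.1 p.1.2 p.2)
    {Δ : ℝ} (hΔ : 0 < Δ) (x : EuclideanSpace ℝ (Fin d)) (i : ℕ) :
    Measurable[ℱ ((i : ℝ) * Δ)] (fun ω => eulerGridFrom Δ 0 b σm W x ω i) := by
  induction i with
  | zero => exact measurable_const
  | succ k ih =>
    have hle : ℱ ((k : ℝ) * Δ) ≤ ℱ (((k : ℕ) + 1 : ℕ) * Δ) := by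
      refine ℱ.mono ?_
      push_cast
      nlinarith
    have hXk : Measurable[ℱ (((k : ℕ) + 1 : ℕ) * Δ)]
        (fun ω => eulerGridFrom Δ 0 b σm W x ω k) := ih.mono hle le_rfl
    have ht1 : ((0 : ℝ) + ((k : ℝ) + 1) * Δ) = (((k : ℕ) + 1 : ℕ) : ℝ) * Δ := by push_cast; ring
    have hW1 : Measurable[ℱ (((k : ℕ) + 1 : ℕ) * Δ)] (W (0 + ((k : ℝ) + 1) * Δ)) := by
      rw [ht1]
      exact hadapt _ (by positivity)
    have hW0 : Measurable[ℱ (((k : ℕ) + 1 : ℕ) * Δ)] (W (0 + (k : ℝ) * Δ)) := by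
      have := hadapt ((0 : ℝ) + (k : ℝ) * Δ) (by positivity)
      refine this.mono (ℱ.mono ?_) le_rfl
      push_cast
      nlinarith
    show Measurable[ℱ (((k : ℕ) + 1 : ℕ) * Δ)] fun ω =>
      eulerGridFrom Δ 0 b σm W x ω k
        + Δ • b (0 + (k : ℝ) * Δ) (eulerGridFrom Δ 0 b σm W x ω k)
        + σm (0 + (k : ℝ) * Δ) (eulerGridFrom Δ 0 b σm W x ω k)
            (W (0 + ((k : ℝ) + 1) * Δ) ω - W (0 + (k : ℝ) * Δ) ω)
    have hbm : Measurable[ℱ (((k : ℕ) + 1 : ℕ) * Δ)]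
        (fun ω => b (0 + (k : ℝ) * Δ) (eulerGridFrom Δ 0 b σm W x ω k)) :=
      hb.comp (measurable_const.prodMk hXk)
    have hσm : Measurable[ℱ (((k : ℕ) + 1 : ℕ) * Δ)]
        (fun ω => σm (0 + (k : ℝ) * Δ) (eulerGridFrom Δ 0 b σm W x ω k)
          (W (0 + ((k : ℝ) + 1) * Δ) ω - W (0 + (k : ℝ) * Δ) ω)) :=
      hσ.comp (((measurable_const.prodMk hXk)).prodMk (hW1.sub hW0))
    exact (hXk.add (hbm.const_smul Δ)).add hσm
open Real in
lemma my_gaussian_tail_one (v : ℝ≥0) {a : ℝ} (ha : 0 ≤ a) :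
    ((gaussianReal 0 v) {x | a ≤ x}).toReal ≤ Real.exp (-a ^ 2 / (2 * (v : ℝ))) := by
  by_cases hv : v = 0
  · subst hv
    simp only [NNReal.coe_zero, mul_zero, div_zero, Real.exp_zero]
    exact ENNReal.toReal_le_of_le_ofReal zero_le_one
      (by simpa using prob_le_one (μ := gaussianReal 0 0) (s := {x | a ≤ x}))
  · have hmeas : MeasurableSet {x : ℝ | a ≤ x} := measurableSet_Ici
    have hvpos : (0 : ℝ) < (v : ℝ) := by positivity
    rw [gaussianReal_apply_eq_integral 0 hv, ENNReal.toReal_ofReal]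
    swap
    · exact integral_nonneg fun x => gaussianPDFReal_nonneg _ _ _
    have key : ∀ x ∈ {x : ℝ | a ≤ x}, gaussianPDFReal 0 v x ≤
        Real.exp (-a ^ 2 / (2 * (v : ℝ))) * gaussianPDFReal a v x := by
      intro x hx
      simp only [Set.mem_setOf_eq] at hx
      unfold gaussianPDFReal
      rw [mul_left_comm, ← Real.exp_add]
      gcongr (√(2 * π * v))⁻¹ * Real.exp ?_
      rw [← add_div, div_le_div_iff_of_pos_right (by positivity)]
      nlinarith [sq_nonneg (x - a)]
    calc ∫ x in {x : ℝ | a ≤ x}, gaussianPDFReal 0 v x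
        ≤ ∫ x in {x : ℝ | a ≤ x},
            Real.exp (-a ^ 2 / (2 * (v : ℝ))) * gaussianPDFReal a v x := by
          refine setIntegral_mono_on (integrable_gaussianPDFReal 0 v).restrict
            (((integrable_gaussianPDFReal a v).const_mul _).restrict) hmeas key
      _ = Real.exp (-a ^ 2 / (2 * (v : ℝ))) * ∫ x in {x : ℝ | a ≤ x}, gaussianPDFReal a v x :=
          integral_const_mul _ _
      _ ≤ Real.exp (-a ^ 2 / (2 * (v : ℝ))) * 1 := by
          gcongr
          rw [← integral_gaussianPDFReal_eq_one a hv]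
          exact setIntegral_le_integral (integrable_gaussianPDFReal a v)
            (ae_of_all _ fun x => gaussianPDFReal_nonneg _ _ _)
      _ = _ := mul_one _

/-- Two-sided Gaussian tail for a random variable. -/
lemma my_gaussian_tail_abs {Ω : Type*} {mΩ : MeasurableSpace Ω} (P : Measure Ω)
    [IsProbabilityMeasure P] {Y : Ω → ℝ} (hY : Measurable Y) {v : ℝ≥0}
    (hmap : P.map Y = gaussianReal 0 v) {a : ℝ} (ha : 0 ≤ a) :
    (P {ω | a ≤ |Y ω|}).toReal ≤ 2 * Real.exp (-a ^ 2 / (2 * (v : ℝ))) := by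
  have hmeas : MeasurableSet {x : ℝ | a ≤ x} := measurableSet_Ici
  have h1 : P {ω | a ≤ Y ω} = (gaussianReal 0 v) {x | a ≤ x} := by
    rw [← hmap, Measure.map_apply hY hmeas]; rfl
  have hmapneg : P.map (fun ω => -Y ω) = gaussianReal 0 v := by
    have : P.map (fun ω => -Y ω) = (P.map Y).map (fun x => (-1 : ℝ) * x) := by
      rw [Measure.map_map (by fun_prop : Measurable fun x : ℝ => -1 * x) hY]
      simp only [Function.comp_def, neg_one_mul]
    rw [this, hmap, gaussianReal_map_const_mul]
    norm_num
  have h2 : P {ω | a ≤ -Y ω} = (gaussianReal 0 v) {x | a ≤ x} := by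
    rw [← hmapneg, Measure.map_apply (f := fun ω => -Y ω) hY.neg hmeas]; rfl
  have hsub : {ω | a ≤ |Y ω|} ⊆ {ω | a ≤ Y ω} ∪ {ω | a ≤ -Y ω} := by
    intro ω hω
    simp only [Set.mem_setOf_eq] at hω
    rcases le_abs.mp hω with h | h
    · exact Or.inl h
    · exact Or.inr h
  calc (P {ω | a ≤ |Y ω|}).toReal
      ≤ ((P {ω | a ≤ Y ω} + P {ω | a ≤ -Y ω})).toReal := by
        apply ENNReal.toReal_mono
        · exact ENNReal.add_ne_top.mpr ⟨measure_ne_top _ _, measure_ne_top _ _⟩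
        · exact (measure_mono hsub).trans (measure_union_le _ _)
    _ = (P {ω | a ≤ Y ω}).toReal + (P {ω | a ≤ -Y ω}).toReal :=
        ENNReal.toReal_add (measure_ne_top _ _) (measure_ne_top _ _)
    _ ≤ Real.exp (-a ^ 2 / (2 * (v : ℝ))) + Real.exp (-a ^ 2 / (2 * (v : ℝ))) := by
        rw [h1, h2]
        exact add_le_add (my_gaussian_tail_one v ha) (my_gaussian_tail_one v ha)
    _ = 2 * Real.exp (-a ^ 2 / (2 * (v : ℝ))) := by ring


lemma my_vector_tail {Ω : Type*} {mΩ : MeasurableSpace Ω} (P : Measure Ω)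
    [IsProbabilityMeasure P] {d' : ℕ} {Y : Ω → EuclideanSpace ℝ (Fin d')} {v : ℝ≥0}
    (hYm : ∀ j, Measurable fun ω => Y ω j)
    (hmap : ∀ j, P.map (fun ω => Y ω j) = gaussianReal 0 v)
    {a : ℝ} (ha : 0 < a) :
    (P {ω | a * ((d' : ℝ) + 1) ≤ ‖Y ω‖}).toReal
      ≤ (d' : ℝ) * (2 * Real.exp (-a ^ 2 / (2 * (v : ℝ)))) := by
  have hBadsub : {ω | a * ((d' : ℝ) + 1) ≤ ‖Y ω‖} ⊆ ⋃ j : Fin d', {ω | a ≤ |Y ω j|} := by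
    intro ω hω
    simp only [Set.mem_setOf_eq] at hω
    by_contra hc
    simp only [Set.mem_iUnion, Set.mem_setOf_eq, not_exists, not_le] at hc
    have hnorm : ‖Y ω‖ ^ 2 = ∑ j : Fin d', ‖Y ω j‖ ^ 2 := by
      rw [EuclideanSpace.norm_eq]
      exact Real.sq_sqrt (Finset.sum_nonneg fun j _ => sq_nonneg _)
    have hcoord : ∀ j : Fin d', ‖Y ω j‖ ^ 2 ≤ a ^ 2 := by
      intro j
      rw [Real.norm_eq_abs]
      have h1 := (hc j).le
      have h2 := abs_nonneg (Y ω j)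
      nlinarith
    have hsum : ∑ j : Fin d', ‖Y ω j‖ ^ 2 ≤ (d' : ℝ) * a ^ 2 := by
      calc ∑ j : Fin d', ‖Y ω j‖ ^ 2 ≤ ∑ _j : Fin d', a ^ 2 :=
            Finset.sum_le_sum fun j _ => hcoord j
        _ = (d' : ℝ) * a ^ 2 := by
            rw [Finset.sum_const, Finset.card_univ, Fintype.card_fin, nsmul_eq_mul]
    have hω2 : (a * ((d' : ℝ) + 1)) ^ 2 ≤ ‖Y ω‖ ^ 2 :=
      pow_le_pow_left₀ (by positivity) hω 2
    rw [hnorm] at hω2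
    nlinarith [mul_pos ha ha,
      mul_nonneg (mul_pos ha ha).le (Nat.cast_nonneg d' : (0:ℝ) ≤ (d' : ℝ)),
      mul_nonneg (mul_pos ha ha).le (sq_nonneg ((d' : ℝ)))]
  have hPj : ∀ j : Fin d', (P {ω | a ≤ |Y ω j|}).toReal
      ≤ 2 * Real.exp (-a ^ 2 / (2 * (v : ℝ))) := fun j =>
    my_gaussian_tail_abs P (hYm j) (hmap j) ha.le
  have hsum_ne : ∑ j : Fin d', P {ω | a ≤ |Y ω j|} ≠ ⊤ :=
    (ENNReal.sum_lt_top.mpr fun j _ => measure_lt_top _ _).ne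
  calc (P {ω | a * ((d' : ℝ) + 1) ≤ ‖Y ω‖}).toReal
      ≤ (∑ j : Fin d', P {ω | a ≤ |Y ω j|}).toReal :=
        ENNReal.toReal_mono hsum_ne
          ((measure_mono hBadsub).trans (measure_iUnion_fintype_le _ _))
    _ = ∑ j : Fin d', (P {ω | a ≤ |Y ω j|}).toReal :=
        ENNReal.toReal_sum fun j _ => measure_ne_top _ _
    _ ≤ ∑ _j : Fin d', 2 * Real.exp (-a ^ 2 / (2 * (v : ℝ))) :=
        Finset.sum_le_sum fun j _ => hPj j
    _ = (d' : ℝ) * (2 * Real.exp (-a ^ 2 / (2 * (v : ℝ)))) := by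
        rw [Finset.sum_const, Finset.card_univ, Fintype.card_fin, nsmul_eq_mul]

set_option maxHeartbeats 4000000 in
/-- **Conditional exit probability is exponentially small far from the boundary**: if at
a grid time `t_i` the Euler scheme lies in `D_{t_i}` at distance at least
`2Δ^((1-ε)/2)` from the boundary, the conditional probability given `F_{t_i}` that it
has exited the time-dependent domain at the next grid time is at most
`C exp(-c Δ^{-ε})`. -/
theorem conditional_exit_prob_small
    {Ω : Type*} {mΩ : MeasurableSpace Ω} (P : Measure Ω) [IsProbabilityMeasure P]
    {d d' : ℕ} (ℱ : Filtration ℝ mΩ)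
    (W : ℝ → Ω → EuclideanSpace ℝ (Fin d'))
    (hW : IsBrownianMotion P W) (hWF : IsBMFiltration P ℱ W)
    (T : ℝ) (hT : 0 < T)
    (b : ℝ → EuclideanSpace ℝ (Fin d) → EuclideanSpace ℝ (Fin d))
    (σm : ℝ → EuclideanSpace ℝ (Fin d) →
      (EuclideanSpace ℝ (Fin d') →L[ℝ] EuclideanSpace ℝ (Fin d)))
    (hbmeas : Measurable (Function.uncurry b))
    (hσmeas : Measurable fun p : (ℝ × EuclideanSpace ℝ (Fin d)) × EuclideanSpace ℝ (Fin d') =>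
      σm p.1.1 p.1.2 p.2)
    (Kb Kσ : ℝ)
    (hbB : ∀ t y, ‖b t y‖ ≤ Kb) (hσB : ∀ t y, ‖σm t y‖ ≤ Kσ)
    (K : ℝ) (hK : 0 ≤ K)
    (F : ℝ → EuclideanSpace ℝ (Fin d) → ℝ)
    (gradF : ℝ → EuclideanSpace ℝ (Fin d) → EuclideanSpace ℝ (Fin d))
    (hFgrad : ∀ t y, HasGradientAt (F t) (gradF t y) y)
    (hFt : ∀ s t y, |F s y - F t y| ≤ K * |s - t|)
    (hTay : ∀ (t : ℝ) (y z : EuclideanSpace ℝ (Fin d)),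
      |F t z - F t y - ⟪gradF t y, z - y⟫| ≤ K * ‖z - y‖ ^ 2)
    (hgradN : ∀ t y, ‖gradF t y‖ ≤ 1)
    (ε : ℝ) (hε0 : 0 < ε) (hε1 : ε < 1) :
    ∃ c > (0:ℝ), ∃ C > (0:ℝ), ∃ Δ₀ > (0:ℝ),
      ∀ m : ℕ, 1 ≤ m → T / m ≤ Δ₀ →
      ∀ x : EuclideanSpace ℝ (Fin d), ∀ i : ℕ, (i : ℝ) * (T / m) < T →
      ∀ᵐ ω ∂P,
        (0 < F ((i : ℝ) * (T / m)) (eulerGridFrom (T / m) 0 b σm W x ω i) ∧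
          2 * (T / m) ^ ((1 - ε) / 2)
            ≤ F ((i : ℝ) * (T / m)) (eulerGridFrom (T / m) 0 b σm W x ω i)) →
        (P[Set.indicator
            {ω' | F (((i : ℝ) + 1) * (T / m)) (eulerGridFrom (T / m) 0 b σm W x ω' (i + 1)) ≤ 0}
            (fun _ => (1:ℝ)) | ℱ ((i : ℝ) * (T / m))]) ω
          ≤ C * Real.exp (-(c * (T / m) ^ (-ε))) := by
  have hKb0 : 0 ≤ Kb := le_trans (norm_nonneg _) (hbB 0 0)
  have hKσ0 : 0 ≤ Kσ := le_trans (norm_nonneg _) (hσB 0 0)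
  set p : ℝ := (1 - ε) / 2 with hp
  clear_value p
  set M : ℝ := 2 * (K + 1) * (Kb + 1) with hMdef
  have hMpos : 0 < M := by positivity
  set B : ℝ := 2 * (K + 1) * (Kσ + 1) * ((d' : ℝ) + 1) with hBdef
  have hBpos : 0 < B := by positivity
  clear_value M B
  refine ⟨(2 * B ^ 2)⁻¹, by positivity, 2 * (d' : ℝ) + 2, by positivity,
    min 1 (M⁻¹ * M⁻¹), lt_min one_pos (by positivity), ?_⟩
  intro m hm hΔ₀ x i hiT
  set Δ : ℝ := T / m with hΔdef
  have hmpos : (0:ℝ) < (m:ℝ) := by exact_mod_cast hm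
  have hΔpos : 0 < Δ := div_pos hT hmpos
  clear_value Δ
  have hΔ1 : Δ ≤ 1 := hΔ₀.trans (min_le_left _ _)
  have hΔM : Δ ≤ M⁻¹ * M⁻¹ := hΔ₀.trans (min_le_right _ _)
  have hΔppos : 0 < Δ ^ p := Real.rpow_pos_of_pos hΔpos p
  have hΔp1 : Δ ^ p ≤ 1 := Real.rpow_le_one hΔpos.le hΔ1 (by rw [hp]; linarith)
  -- the key scale comparison `M * Δ ≤ Δ ^ p`
  have hfact1 : M * Δ ≤ Δ ^ p := by
    have h1 : Δ ^ (1 - p) ≤ Real.sqrt Δ := by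
      rw [Real.sqrt_eq_rpow Δ]
      exact Real.rpow_le_rpow_of_exponent_ge hΔpos hΔ1 (by rw [hp]; linarith)
    have h2 : Real.sqrt Δ ≤ M⁻¹ :=
      (Real.sqrt_le_sqrt hΔM).trans (le_of_eq (Real.sqrt_mul_self (by positivity)))
    have h3 : Δ ^ p * Δ ^ (1 - p) = Δ := by
      rw [← Real.rpow_add hΔpos, show p + (1 - p) = 1 by ring, Real.rpow_one]
    have h4 : Δ ^ (1 - p) ≤ M⁻¹ := h1.trans h2
    calc M * Δ = M * (Δ ^ p * Δ ^ (1 - p)) := by rw [h3]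
      _ = Δ ^ p * (M * Δ ^ (1 - p)) := by ring
      _ ≤ Δ ^ p * (M * M⁻¹) := by gcongr
      _ = Δ ^ p := by rw [mul_inv_cancel₀ hMpos.ne', mul_one]
  have h2p : Δ ^ p * Δ ^ p = Δ * Δ ^ (-ε) := by
    rw [← Real.rpow_add hΔpos, show p + p = 1 + -ε by rw [hp]; ring,
      Real.rpow_add hΔpos, Real.rpow_one]
  -- abbreviations
  set X : ℕ → Ω → EuclideanSpace ℝ (Fin d) := fun k ω => eulerGridFrom Δ 0 b σm W x ω k
    with hXdef
  have hzi : (0:ℝ) + (i : ℝ) * Δ = (i : ℝ) * Δ := zero_add _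
  have hzi1 : (0:ℝ) + ((i : ℝ) + 1) * Δ = ((i : ℝ) + 1) * Δ := zero_add _
  have hti0 : (0:ℝ) ≤ (i : ℝ) * Δ := by positivity
  have hti1 : (i : ℝ) * Δ ≤ ((i : ℝ) + 1) * Δ := by nlinarith
  -- measurability facts
  have hFcont : ∀ t : ℝ, Continuous (F t) := fun t =>
    continuous_iff_continuousAt.mpr fun y => (hFgrad t y).hasFDerivAt.continuousAt
  have hXi : Measurable[ℱ ((i : ℝ) * Δ)] (X i) :=
    eulerGridFrom_measurable ℱ hWF.adapted hbmeas hσmeas hΔpos x i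
  have hXi1 : Measurable (X (i + 1)) := by
    have := eulerGridFrom_measurable ℱ hWF.adapted hbmeas hσmeas hΔpos x (i + 1)
    exact this.mono (ℱ.le _) le_rfl
  set E₁ : Set Ω := {ω' | F (((i : ℝ) + 1) * Δ) (X (i + 1) ω') ≤ 0} with hE₁def
  set G : Set Ω := {ω | 2 * Δ ^ p ≤ F ((i : ℝ) * Δ) (X i ω)} with hGdef
  set Bad : Set Ω := {ω | Δ ^ p / (2 * (K + 1) * (Kσ + 1))
      ≤ ‖W (((i : ℝ) + 1) * Δ) ω - W ((i : ℝ) * Δ) ω‖} with hBaddef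
  have hE₁meas : MeasurableSet E₁ :=
    measurableSet_le ((hFcont _).measurable.comp hXi1) measurable_const
  have hGmeas : MeasurableSet[ℱ ((i : ℝ) * Δ)] G :=
    measurableSet_le measurable_const ((hFcont _).measurable.comp hXi)
  have hΔWmeas : Measurable fun ω => W (((i : ℝ) + 1) * Δ) ω - W ((i : ℝ) * Δ) ω :=
    (hW.meas _).sub (hW.meas _)
  have hBadmeas : MeasurableSet Bad := measurableSet_le measurable_const hΔWmeas.norm
  set f : Ω → ℝ := E₁.indicator (fun _ => (1:ℝ)) with hfdef
  set g : Ω → ℝ := Bad.indicator (fun _ => (1:ℝ)) with hgdef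
  have hf_int : Integrable f P := (integrable_const (1:ℝ)).indicator hE₁meas
  have hg_int : Integrable g P := (integrable_const (1:ℝ)).indicator hBadmeas
  -- the key pathwise inclusion
  have hsub : G ∩ E₁ ⊆ Bad := by
    rintro ω ⟨hωG, hωE⟩
    simp only [hGdef, hE₁def, Set.mem_setOf_eq] at hωG hωE
    set y := X i ω with hy
    set z := X (i + 1) ω with hz
    have hXstep : z = y + Δ • b (0 + (i : ℝ) * Δ) y
        + σm (0 + (i : ℝ) * Δ) y (W (0 + ((i : ℝ) + 1) * Δ) ω - W (0 + (i : ℝ) * Δ) ω) := rfl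
    rw [hzi, hzi1] at hXstep
    have hu : z - y = Δ • b ((i : ℝ) * Δ) y
        + σm ((i : ℝ) * Δ) y (W (((i : ℝ) + 1) * Δ) ω - W ((i : ℝ) * Δ) ω) := by
      rw [hXstep]; abel
    set w : ℝ := ‖W (((i : ℝ) + 1) * Δ) ω - W ((i : ℝ) * Δ) ω‖ with hw
    have hw0 : 0 ≤ w := norm_nonneg _
    have hn : ‖z - y‖ ≤ Kb * Δ + (Kσ + 1) * w := by
      rw [hu]
      calc ‖Δ • b ((i : ℝ) * Δ) y
            + σm ((i : ℝ) * Δ) y (W (((i : ℝ) + 1) * Δ) ω - W ((i : ℝ) * Δ) ω)‖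
          ≤ ‖Δ • b ((i : ℝ) * Δ) y‖
            + ‖σm ((i : ℝ) * Δ) y (W (((i : ℝ) + 1) * Δ) ω - W ((i : ℝ) * Δ) ω)‖ :=
            norm_add_le _ _
        _ ≤ Kb * Δ + (Kσ + 1) * w := by
            refine add_le_add ?_ ?_
            · rw [norm_smul, Real.norm_eq_abs, abs_of_pos hΔpos, mul_comm]
              exact mul_le_mul_of_nonneg_right (hbB _ _) hΔpos.le
            · refine ((σm _ _).le_opNorm _).trans ?_
              exact mul_le_mul (by linarith [hσB ((i : ℝ) * Δ) y]) le_rfl (norm_nonneg _)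
                (by linarith)
    set n : ℝ := ‖z - y‖ with hndef
    have hn0 : 0 ≤ n := norm_nonneg _
    show Δ ^ p / (2 * (K + 1) * (Kσ + 1)) ≤ w
    -- Taylor + time regularity
    have hT1 : -(K * n ^ 2) ≤ F ((i : ℝ) * Δ) z - F ((i : ℝ) * Δ) y
        - ⟪gradF ((i : ℝ) * Δ) y, z - y⟫ := (abs_le.mp (hTay ((i : ℝ) * Δ) y z)).1
    have hT2 : -n ≤ ⟪gradF ((i : ℝ) * Δ) y, z - y⟫ := by
      have habs : |⟪gradF ((i : ℝ) * Δ) y, z - y⟫| ≤ n :=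
        (abs_real_inner_le_norm _ _).trans
          (mul_le_of_le_one_left (norm_nonneg _) (hgradN _ _))
      linarith [(abs_le.mp habs).1]
    have hT3 : -(K * Δ) ≤ F (((i : ℝ) + 1) * Δ) z - F ((i : ℝ) * Δ) z := by
      have := hFt (((i : ℝ) + 1) * Δ) ((i : ℝ) * Δ) z
      rw [show ((i : ℝ) + 1) * Δ - (i : ℝ) * Δ = Δ by ring, abs_of_pos hΔpos] at this
      linarith [(abs_le.mp this).1]
    clear_value w n y z
    have hKM : K ≤ M := by rw [hMdef]; nlinarith
    have hKΔ : K * Δ ≤ Δ ^ p := by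
      nlinarith [mul_le_mul_of_nonneg_right hKM hΔpos.le]
    have hmain : Δ ^ p ≤ n + K * n ^ 2 := by linarith
    have hn_low : Δ ^ p ≤ (K + 1) * n := by
      rcases le_or_gt n 1 with h | h
      · have hsq : n ^ 2 ≤ n := by nlinarith
        have := mul_le_mul_of_nonneg_left hsq hK
        linarith
      · have := mul_nonneg hK (by linarith : (0:ℝ) ≤ n)
        linarith
    have hKb2 : 2 * (K + 1) * (Kb * Δ) ≤ Δ ^ p := by
      have hKbM : 2 * (K + 1) * Kb ≤ M := by rw [hMdef]; nlinarith
      nlinarith [mul_le_mul_of_nonneg_right hKbM hΔpos.le]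
    have hfinal : Δ ^ p ≤ 2 * (K + 1) * (Kσ + 1) * w := by
      have hmul := mul_le_mul_of_nonneg_left hn (show (0:ℝ) ≤ K + 1 by linarith)
      have hexp : (K + 1) * (Kb * Δ + (Kσ + 1) * w)
          = (K + 1) * (Kb * Δ) + (K + 1) * (Kσ + 1) * w := by ring
      have hexp2 : 2 * (K + 1) * (Kb * Δ) = 2 * ((K + 1) * (Kb * Δ)) := by ring
      have hexp3 : 2 * (K + 1) * (Kσ + 1) * w = 2 * ((K + 1) * (Kσ + 1) * w) := by ring
      linarith
    rw [div_le_iff₀ (by positivity)]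
    linarith
  -- conditional expectation manipulations
  have h1 : P[G.indicator f | ℱ ((i : ℝ) * Δ)]
      =ᵐ[P] G.indicator (P[f | ℱ ((i : ℝ) * Δ)]) := condExp_indicator hf_int hGmeas
  have hpoint : G.indicator f ≤ g := by
    rw [hfdef, Set.indicator_indicator, hgdef]
    exact fun ω => Set.indicator_le_indicator_of_subset hsub (fun _ => zero_le_one) ω
  have h2 : P[G.indicator f | ℱ ((i : ℝ) * Δ)] ≤ᵐ[P] P[g | ℱ ((i : ℝ) * Δ)] :=
    condExp_mono (hf_int.indicator (ℱ.le _ _ hGmeas)) hg_int (ae_of_all _ hpoint)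
  have hsm : StronglyMeasurable[MeasurableSpace.comap
      (fun ω => W (((i : ℝ) + 1) * Δ) ω - W ((i : ℝ) * Δ) ω) inferInstance] g := by
    have hb : MeasurableSet[MeasurableSpace.comap
        (fun ω => W (((i : ℝ) + 1) * Δ) ω - W ((i : ℝ) * Δ) ω) inferInstance] Bad :=
      ⟨{v | Δ ^ p / (2 * (K + 1) * (Kσ + 1)) ≤ ‖v‖},
        measurableSet_le measurable_const measurable_norm, rfl⟩
    exact stronglyMeasurable_const.indicator hb
  have h3 : P[g | ℱ ((i : ℝ) * Δ)] =ᵐ[P] fun _ => ∫ ω', g ω' ∂P :=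
    condExp_indep_eq hΔWmeas.comap_le (ℱ.le _) hsm
      (hWF.indep_past ((i : ℝ) * Δ) (((i : ℝ) + 1) * Δ) hti0 hti1)
  have hint_g : ∫ ω', g ω' ∂P = (P Bad).toReal := by
    rw [hgdef, integral_indicator_const (1:ℝ) hBadmeas, smul_eq_mul, mul_one]; rfl
  -- the tail estimate
  have htail : (P Bad).toReal
      ≤ (2 * (d' : ℝ) + 2) * Real.exp (-((2 * B ^ 2)⁻¹ * Δ ^ (-ε))) := by
    set a : ℝ := Δ ^ p / B with hadef
    have hapos : 0 < a := by rw [hadef]; positivity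
    have hra : a * ((d' : ℝ) + 1) = Δ ^ p / (2 * (K + 1) * (Kσ + 1)) := by
      rw [hadef, hBdef]
      field_simp
    have hBadeq : Bad = {ω | a * ((d' : ℝ) + 1)
        ≤ ‖W (((i : ℝ) + 1) * Δ) ω - W ((i : ℝ) * Δ) ω‖} := by
      rw [hBaddef, hra]
    have hYm : ∀ j : Fin d', Measurable fun ω =>
        (W (((i : ℝ) + 1) * Δ) ω - W ((i : ℝ) * Δ) ω) j :=
      fun j => (EuclideanSpace.proj j).continuous.measurable.comp hΔWmeas
    have hmap : ∀ j : Fin d', P.map (fun ω =>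
        (W (((i : ℝ) + 1) * Δ) ω - W ((i : ℝ) * Δ) ω) j)
        = gaussianReal 0 (Real.toNNReal Δ) := by
      intro j
      have hg := hW.gauss ((i : ℝ) * Δ) (((i : ℝ) + 1) * Δ) hti0 hti1 j
      rw [show ((i : ℝ) + 1) * Δ - (i : ℝ) * Δ = Δ by ring] at hg
      exact hg
    have hexp : -a ^ 2 / (2 * ((Real.toNNReal Δ : ℝ≥0) : ℝ))
        = -((2 * B ^ 2)⁻¹ * Δ ^ (-ε)) := by
      rw [Real.coe_toNNReal _ hΔpos.le]
      have ha2 : a ^ 2 = Δ * Δ ^ (-ε) / B ^ 2 := by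
        rw [hadef, div_pow, pow_two, h2p]
      rw [ha2]
      field_simp
    clear_value a
    rw [hBadeq]
    calc (P {ω | a * ((d' : ℝ) + 1)
        ≤ ‖W (((i : ℝ) + 1) * Δ) ω - W ((i : ℝ) * Δ) ω‖}).toReal
        ≤ (d' : ℝ) * (2 * Real.exp (-a ^ 2 / (2 * ((Real.toNNReal Δ : ℝ≥0) : ℝ)))) :=
          my_vector_tail P hYm hmap hapos
      _ ≤ (2 * (d' : ℝ) + 2) * Real.exp (-((2 * B ^ 2)⁻¹ * Δ ^ (-ε))) := by
          rw [hexp]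
          have hep := Real.exp_pos (-((2 * B ^ 2)⁻¹ * Δ ^ (-ε)))
          nlinarith [(Nat.cast_nonneg d' : (0:ℝ) ≤ (d' : ℝ)), hep]
  -- conclusion
  filter_upwards [h1, h2, h3] with ω hω1 hω2 hω3 hyp
  have hωG : ω ∈ G := hyp.2
  calc (P[f | ℱ ((i : ℝ) * Δ)]) ω
      = G.indicator (P[f | ℱ ((i : ℝ) * Δ)]) ω := (Set.indicator_of_mem hωG _).symm
    _ = (P[G.indicator f | ℱ ((i : ℝ) * Δ)]) ω := hω1.symm
    _ ≤ (P[g | ℱ ((i : ℝ) * Δ)]) ω := hω2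
    _ = ∫ ω', g ω' ∂P := hω3
    _ = (P Bad).toReal := hint_g
    _ ≤ (2 * (d' : ℝ) + 2) * Real.exp (-((2 * B ^ 2)⁻¹ * Δ ^ (-ε))) := htail
end
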